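/- Let W be the random walk matrix of an irreducible Markov chain with stationary s, and let C_{uv} = H_{uv} + H_{vu} be the commute time. Then C_{uv} = (1_u − 1_v)ᵀ ((I−W)S)† (1_u − 1_v) = (1_u − 1_v)ᵀ S⁻¹ (I−W)† (1_u − 1_v) = (1_u − 1_v)ᵀ (L_b†)ᵀ U_b L_b† (1_u − 1_v), where S = diag(s), L_b = (I−W)S is the Eulerian rescaling, and U_b = (L_b + L_bᵀ)/2. -/

import Mathlib

open Matrix Finset

private lemma ctf_pow_nonneg {n : ℕ} {W : Matrix (Fin n) (Fin n) ℝ}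
    (hW : ∀ i j, 0 ≤ W i j) : ∀ (k : ℕ) (i j : Fin n), 0 ≤ (W ^ k) i j := by
  intro k
  induction k with
  | zero =>
    intro i j
    simp only [pow_zero, Matrix.one_apply]
    split <;> norm_num
  | succ k ih =>
    intro i j
    rw [pow_succ, Matrix.mul_apply]
    exact Finset.sum_nonneg fun m _ => mul_nonneg (ih i m) (hW m j)

private lemma ctf_pow_col {n : ℕ} {W : Matrix (Fin n) (Fin n) ℝ}
    (hWcol : ∀ j, ∑ i, W i j = 1) : ∀ (k : ℕ) (j : Fin n), ∑ i, (W ^ k) i j = 1 := by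
  intro k
  induction k with
  | zero => intro j; simp [Matrix.one_apply]
  | succ k ih =>
    intro j
    simp only [pow_succ, Matrix.mul_apply]
    rw [Finset.sum_comm]
    calc ∑ m, ∑ i, (W ^ k) i m * W m j = ∑ m, (∑ i, (W ^ k) i m) * W m j := by
          simp [Finset.sum_mul]
      _ = ∑ m, W m j := Finset.sum_congr rfl fun m _ => by rw [ih m, one_mul]
      _ = 1 := hWcol j

private lemma ctf_harmonic {n : ℕ} {W : Matrix (Fin n) (Fin n) ℝ}
    (hW : ∀ i j, 0 ≤ W i j) (hWcol : ∀ j, ∑ i, W i j = 1)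
    (hirr : ∀ i j : Fin n, ∃ k : ℕ, 0 < (W ^ k) i j)
    {x : Fin n → ℝ} (hx : ∀ j, x j = ∑ i, W i j * x i) (i j : Fin n) :
    x i = x j := by
  have hxk : ∀ (k : ℕ) (j : Fin n), x j = ∑ m, (W ^ k) m j * x m := by
    intro k
    induction k with
    | zero => intro j; simp [Matrix.one_apply]
    | succ k ih =>
      intro j
      calc x j = ∑ i2, (W ^ k) i2 j * x i2 := ih j
        _ = ∑ i2, (W ^ k) i2 j * ∑ m, W m i2 * x m :=
            Finset.sum_congr rfl fun i2 _ => by rw [← hx i2]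
        _ = ∑ i2, ∑ m, (W ^ k) i2 j * (W m i2 * x m) := by
            simp [Finset.mul_sum]
        _ = ∑ m, ∑ i2, (W ^ k) i2 j * (W m i2 * x m) := Finset.sum_comm
        _ = ∑ m, (∑ i2, W m i2 * (W ^ k) i2 j) * x m := by
            refine Finset.sum_congr rfl fun m _ => ?_
            rw [Finset.sum_mul]
            exact Finset.sum_congr rfl fun i2 _ => by ring
        _ = ∑ m, (W ^ (k+1)) m j * x m := by
            refine Finset.sum_congr rfl fun m _ => ?_
            rw [pow_succ', Matrix.mul_apply]
  obtain ⟨j0, -, hj0⟩ := Finset.exists_max_image Finset.univ x ⟨i, Finset.mem_univ i⟩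
  have key : ∀ m, x m = x j0 := by
    intro m
    obtain ⟨k, hk⟩ := hirr m j0
    have h2 : ∑ z, (W ^ k) z j0 * x j0 = x j0 := by
      rw [← Finset.sum_mul, ctf_pow_col hWcol k j0, one_mul]
    have h1 : ∑ z, (W ^ k) z j0 * (x j0 - x z) = 0 := by
      calc ∑ z, (W ^ k) z j0 * (x j0 - x z)
          = ∑ z, ((W ^ k) z j0 * x j0 - (W ^ k) z j0 * x z) :=
            Finset.sum_congr rfl fun z _ => by ring
        _ = (∑ z, (W ^ k) z j0 * x j0) - ∑ z, (W ^ k) z j0 * x z :=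
            Finset.sum_sub_distrib _ _
        _ = x j0 - x j0 := by rw [h2, ← hxk k j0]
        _ = 0 := sub_self _
    have hnn : ∀ z ∈ Finset.univ, 0 ≤ (W ^ k) z j0 * (x j0 - x z) :=
      fun z _ => mul_nonneg (ctf_pow_nonneg hW k z j0)
        (sub_nonneg.2 (hj0 z (Finset.mem_univ z)))
    have h3 := (Finset.sum_eq_zero_iff_of_nonneg hnn).1 h1 m (Finset.mem_univ m)
    rcases mul_eq_zero.1 h3 with h | h
    · exact absurd h (ne_of_gt hk)
    · linarith [sub_eq_zero.1 h]
  rw [key i, key j]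

private lemma ctf_s_pos {n : ℕ} {W : Matrix (Fin n) (Fin n) ℝ}
    (hW : ∀ i j, 0 ≤ W i j)
    (hirr : ∀ i j : Fin n, ∃ k : ℕ, 0 < (W ^ k) i j)
    {s : Fin n → ℝ} (hs : ∀ i, 0 ≤ s i) (hs1 : ∑ i, s i = 1)
    (hstat : W.mulVec s = s) (j : Fin n) : 0 < s j := by
  have hpowstat : ∀ k : ℕ, (W ^ k).mulVec s = s := by
    intro k
    induction k with
    | zero => simp
    | succ k ih => rw [pow_succ, ← Matrix.mulVec_mulVec, hstat, ih]
  obtain ⟨j0, hj0⟩ : ∃ j0, 0 < s j0 := by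
    by_contra h
    push_neg at h
    have : (∑ i, s i) ≤ 0 := Finset.sum_nonpos fun i _ => h i
    linarith
  obtain ⟨k, hk⟩ := hirr j j0
  have hexp : ∑ i, (W ^ k) j i * s i = s j := by
    simpa [Matrix.mulVec, dotProduct] using congrFun (hpowstat k) j
  have hle : (W ^ k) j j0 * s j0 ≤ ∑ i, (W ^ k) j i * s i :=
    Finset.single_le_sum (fun i _ => mul_nonneg (ctf_pow_nonneg hW k j i) (hs i))
      (Finset.mem_univ j0)
  have hpos : 0 < (W ^ k) j j0 * s j0 := mul_pos hk hj0
  linarith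


/-- `B` is the Moore–Penrose pseudoinverse of `A` (the four Penrose conditions). -/
def IsMoorePenrose {m : Type*} [Fintype m] [DecidableEq m]
    (A B : Matrix m m ℝ) : Prop :=
  A * B * A = A ∧ B * A * B = B ∧ (A * B)ᵀ = A * B ∧ (B * A)ᵀ = B * A

/-- Commute time formulas: with `S = diag(s)`, `L_b = (I - W) S` the Eulerian rescaling
and `U_b = (L_b + L_bᵀ)/2`, the commute time `C_{uv} = H_{uv} + H_{vu}` satisfies
`C_{uv} = (1_u - 1_v)ᵀ ((I-W)S)† (1_u - 1_v) = (1_u - 1_v)ᵀ S⁻¹ (I-W)† (1_u - 1_v)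
 = (1_u - 1_v)ᵀ (L_b†)ᵀ U_b L_b† (1_u - 1_v)`. -/
theorem commute_time_formulas {n : ℕ} (W : Matrix (Fin n) (Fin n) ℝ)
    (hWnn : ∀ i j, 0 ≤ W i j) (hWcol : ∀ j, ∑ i, W i j = 1)
    (hirr : ∀ i j : Fin n, ∃ k : ℕ, 0 < (W ^ k) i j)
    (s : Fin n → ℝ) (hs : ∀ i, 0 ≤ s i) (hs1 : ∑ i, s i = 1)
    (hstat : W.mulVec s = s)
    (u v : Fin n)
    -- `hv` is the vector of hitting times to `v`, `hu` to `u`.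
    (hv : Fin n → ℝ) (hv0 : hv v = 0)
    (hvrec : ∀ w : Fin n, w ≠ v → hv w = 1 + ∑ z, W z w * hv z)
    (hu : Fin n → ℝ) (hu0 : hu u = 0)
    (hurec : ∀ w : Fin n, w ≠ u → hu w = 1 + ∑ z, W z w * hu z)
    (C : ℝ) (hC : C = hv u + hu v)
    (Lb Ub : Matrix (Fin n) (Fin n) ℝ)
    (hLb : Lb = ((1 : Matrix (Fin n) (Fin n) ℝ) - W) * Matrix.diagonal s)
    (hUb : Ub = (1 / 2 : ℝ) • (Lb + Lbᵀ))
    (Lbp Lp : Matrix (Fin n) (Fin n) ℝ)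
    (hLbp : IsMoorePenrose Lb Lbp)
    (hLp : IsMoorePenrose ((1 : Matrix (Fin n) (Fin n) ℝ) - W) Lp) :
    C = ((Pi.single u 1 : Fin n → ℝ) - Pi.single v 1) ⬝ᵥ
          Lbp.mulVec ((Pi.single u 1 : Fin n → ℝ) - Pi.single v 1) ∧
    C = ((Pi.single u 1 : Fin n → ℝ) - Pi.single v 1) ⬝ᵥ
          ((Matrix.diagonal s)⁻¹ * Lp).mulVec
            ((Pi.single u 1 : Fin n → ℝ) - Pi.single v 1) ∧
    C = ((Pi.single u 1 : Fin n → ℝ) - Pi.single v 1) ⬝ᵥ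
          (Lbpᵀ * Ub * Lbp).mulVec ((Pi.single u 1 : Fin n → ℝ) - Pi.single v 1) := by
  classical
  by_cases huv : u = v
  · subst huv
    have h0 : (Pi.single u 1 : Fin n → ℝ) - Pi.single u 1 = 0 := sub_self _
    rw [hC, hv0, hu0, h0]
    simp
  -- main case u ≠ v
  have hspos : ∀ i, 0 < s i := fun i => ctf_s_pos hWnn hirr hs hs1 hstat i
  set χ : Fin n → ℝ := (Pi.single u 1 : Fin n → ℝ) - Pi.single v 1 with hχdef
  have hχ_apply : ∀ w, χ w = (if w = u then (1:ℝ) else 0) - (if w = v then 1 else 0) := by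
    intro w
    simp [hχdef, Pi.single_apply]
  have hχsum : ∑ w, χ w = 0 := by
    simp [hχ_apply, Finset.sum_sub_distrib]
  -- key recurrence consequence
  have key : ∀ (t : Fin n) (h : Fin n → ℝ), h t = 0 →
      (∀ w, w ≠ t → h w = 1 + ∑ z, W z w * h z) →
      ∀ w, h w - ∑ z, W z w * h z = 1 - (if w = t then (s t)⁻¹ else 0) := by
    intro t h ht hrec
    have hswap : ∑ w, s w * ∑ z, W z w * h z = ∑ z, s z * h z := by
      calc ∑ w, s w * ∑ z, W z w * h z
          = ∑ w, ∑ z, W z w * s w * h z := by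
            refine Finset.sum_congr rfl fun w _ => ?_
            rw [Finset.mul_sum]
            exact Finset.sum_congr rfl fun z _ => by ring
        _ = ∑ z, ∑ w, W z w * s w * h z := Finset.sum_comm
        _ = ∑ z, s z * h z := by
            refine Finset.sum_congr rfl fun z _ => ?_
            rw [← Finset.sum_mul]
            congr 1
            simpa [Matrix.mulVec, dotProduct] using congrFun hstat z
    have hsum0 : ∑ w, s w * (h w - ∑ z, W z w * h z) = 0 := by
      calc ∑ w, s w * (h w - ∑ z, W z w * h z)
          = ∑ w, (s w * h w - s w * ∑ z, W z w * h z) :=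
            Finset.sum_congr rfl fun w _ => by ring
        _ = (∑ w, s w * h w) - ∑ w, s w * ∑ z, W z w * h z := Finset.sum_sub_distrib _ _
        _ = 0 := by rw [hswap, sub_self]
    have hφ1 : ∀ w, w ≠ t → h w - ∑ z, W z w * h z = 1 := by
      intro w hw
      have := hrec w hw
      linarith
    have hserase : ∑ w ∈ Finset.univ.erase t, s w = 1 - s t := by
      have h5 := Finset.add_sum_erase Finset.univ s (Finset.mem_univ t)
      rw [hs1] at h5
      linarith
    have hφt : h t - ∑ z, W z t * h z = 1 - (s t)⁻¹ := by
      have hsplit := Finset.add_sum_erase Finset.univ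
        (fun w => s w * (h w - ∑ z, W z w * h z)) (Finset.mem_univ t)
      rw [hsum0] at hsplit
      have hterase : ∑ w ∈ Finset.univ.erase t,
          (s w * (h w - ∑ z, W z w * h z)) = 1 - s t := by
        rw [← hserase]
        refine Finset.sum_congr rfl fun w hw => ?_
        rw [hφ1 w (Finset.ne_of_mem_erase hw), mul_one]
      rw [hterase] at hsplit
      have hstne : s t ≠ 0 := (hspos t).ne'
      have hsplit' : s t * (h t - ∑ z, W z t * h z) + (1 - s t) = 0 := hsplit
      have hss : s t * (1 - (s t)⁻¹) = s t - 1 := by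
        rw [mul_sub, mul_inv_cancel₀ hstne, mul_one]
      have h2 : s t * (h t - ∑ z, W z t * h z) = s t * (1 - (s t)⁻¹) := by
        rw [hss]; linarith
      exact mul_left_cancel₀ hstne h2
    intro w
    by_cases hw : w = t
    · subst hw; simpa using hφt
    · simp [hw, hφ1 w hw]
  set g : Fin n → ℝ := fun w => hv w - hu w with hgdef
  have hkv := key v hv hv0 hvrec
  have hku := key u hu hu0 hurec
  have sLtg : ∀ w, s w * (g w - ∑ z, W z w * g z) = χ w := by
    intro w
    have hsub : g w - ∑ z, W z w * g z
        = (hv w - ∑ z, W z w * hv z) - (hu w - ∑ z, W z w * hu z) := by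
      simp only [hgdef]
      have : (∑ z, W z w * (hv z - hu z))
          = (∑ z, W z w * hv z) - ∑ z, W z w * hu z := by
        rw [← Finset.sum_sub_distrib]
        exact Finset.sum_congr rfl fun z _ => by ring
      rw [this]; ring
    rw [hsub, hkv w, hku w, hχ_apply w]
    by_cases hwu : w = u
    · rw [hwu, if_neg huv, if_neg huv, if_pos rfl, if_pos rfl]
      have hne : s u ≠ 0 := (hspos u).ne'
      have hx : s u * ((1 - 0) - (1 - (s u)⁻¹)) = s u * (s u)⁻¹ := by ring
      rw [hx, mul_inv_cancel₀ hne]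
      norm_num
    · by_cases hwv : w = v
      · have hvu : ¬ v = u := fun h => huv h.symm
        rw [hwv, if_neg hvu, if_neg hvu, if_pos rfl, if_pos rfl]
        have hne : s v ≠ 0 := (hspos v).ne'
        have hx : s v * ((1 - (s v)⁻¹) - (1 - 0)) = -(s v * (s v)⁻¹) := by ring
        rw [hx, mul_inv_cancel₀ hne]
        norm_num
      · simp [hwu, hwv]
  -- Lbᵀ g = χ
  have hLbTg : Lbᵀ.mulVec g = χ := by
    funext w
    have h1 : (Lbᵀ.mulVec g) w = ∑ z, Lb z w * g z := by
      simp [Matrix.mulVec, dotProduct, Matrix.transpose_apply]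
    rw [h1]
    calc ∑ z, Lb z w * g z
        = ∑ z, s w * (((if z = w then (1:ℝ) else 0) - W z w) * g z) := by
          refine Finset.sum_congr rfl fun z _ => ?_
          rw [hLb, Matrix.mul_diagonal]
          simp [Matrix.sub_apply, Matrix.one_apply]
          ring
      _ = s w * ∑ z, ((if z = w then (1:ℝ) else 0) - W z w) * g z :=
          (Finset.mul_sum _ _ _).symm
      _ = s w * (g w - ∑ z, W z w * g z) := by
          congr 1
          have : (∑ z, ((if z = w then (1:ℝ) else 0) - W z w) * g z)
              = (∑ z, (if z = w then (1:ℝ) else 0) * g z) - ∑ z, W z w * g z := by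
            rw [← Finset.sum_sub_distrib]
            exact Finset.sum_congr rfl fun z _ => by ring
          rw [this]
          congr 1
          simp [ite_mul]
      _ = χ w := sLtg w
  -- g ᵥ* L
  have hgL : ∀ w, (g ᵥ* ((1:Matrix (Fin n) (Fin n) ℝ) - W)) w = (s w)⁻¹ * χ w := by
    intro w
    have h1 : (g ᵥ* ((1:Matrix (Fin n) (Fin n) ℝ) - W)) w
        = g w - ∑ z, W z w * g z := by
      have : (g ᵥ* ((1:Matrix (Fin n) (Fin n) ℝ) - W)) w
          = ∑ z, g z * ((if z = w then (1:ℝ) else 0) - W z w) := by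
        simp [Matrix.vecMul, dotProduct, Matrix.sub_apply, Matrix.one_apply]
      rw [this]
      have : (∑ z, g z * ((if z = w then (1:ℝ) else 0) - W z w))
          = (∑ z, (if z = w then (1:ℝ) else 0) * g z) - ∑ z, W z w * g z := by
        rw [← Finset.sum_sub_distrib]
        exact Finset.sum_congr rfl fun z _ => by ring
      rw [this]
      congr 1
      simp [ite_mul]
    have hne : s w ≠ 0 := (hspos w).ne'
    rw [h1, ← sLtg w, ← mul_assoc, inv_mul_cancel₀ hne, one_mul]
  -- column sums
  have hLcol : ∀ j, ∑ i, ((1:Matrix (Fin n) (Fin n) ℝ) - W) i j = 0 := by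
    intro j
    simp [Matrix.sub_apply, Matrix.one_apply, Finset.sum_sub_distrib, hWcol j]
  have hLbcol : ∀ j, ∑ i, Lb i j = 0 := by
    intro j
    calc ∑ i, Lb i j = ∑ i, ((1:Matrix (Fin n) (Fin n) ℝ) - W) i j * s j :=
          Finset.sum_congr rfl fun i _ => by rw [hLb, Matrix.mul_diagonal]
      _ = (∑ i, ((1:Matrix (Fin n) (Fin n) ℝ) - W) i j) * s j := (Finset.sum_mul _ _ _).symm
      _ = 0 := by rw [hLcol j, zero_mul]
  have colmul : ∀ (A B : Matrix (Fin n) (Fin n) ℝ), (∀ j, ∑ i, A i j = 0) →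
      ∀ j, ∑ i, (A * B) i j = 0 := by
    intro A B hA j
    calc ∑ i, (A * B) i j = ∑ i, ∑ m, A i m * B m j := by
          simp [Matrix.mul_apply]
      _ = ∑ m, ∑ i, A i m * B m j := Finset.sum_comm
      _ = ∑ m, (∑ i, A i m) * B m j :=
          Finset.sum_congr rfl fun m _ => (Finset.sum_mul _ _ _).symm
      _ = 0 := by simp [hA]
  -- projection lemma
  have proj : ∀ P : Matrix (Fin n) (Fin n) ℝ,
      ((1:Matrix (Fin n) (Fin n) ℝ) - W)ᵀ * P = ((1:Matrix (Fin n) (Fin n) ℝ) - W)ᵀ →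
      (∀ j, ∑ i, P i j = 0) → P.mulVec χ = χ := by
    intro P hPL hPcol
    set x : Fin n → ℝ := χ - P.mulVec χ with hxdef
    have hharm : ∀ j, x j = ∑ i, W i j * x i := by
      have h0 : ((1:Matrix (Fin n) (Fin n) ℝ) - W)ᵀ.mulVec x = 0 := by
        rw [hxdef, Matrix.mulVec_sub, Matrix.mulVec_mulVec, hPL, sub_self]
      intro j
      have hcf := congrFun h0 j
      have hexpand : (((1:Matrix (Fin n) (Fin n) ℝ) - W)ᵀ.mulVec x) j
          = x j - ∑ i, W i j * x i := by
        have h2 : (((1:Matrix (Fin n) (Fin n) ℝ) - W)ᵀ.mulVec x) j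
            = ∑ i, ((if i = j then (1:ℝ) else 0) - W i j) * x i := by
          simp [Matrix.mulVec, dotProduct, Matrix.transpose_apply,
            Matrix.sub_apply, Matrix.one_apply]
        rw [h2]
        have : (∑ i, ((if i = j then (1:ℝ) else 0) - W i j) * x i)
            = (∑ i, (if i = j then (1:ℝ) else 0) * x i) - ∑ i, W i j * x i := by
          rw [← Finset.sum_sub_distrib]
          exact Finset.sum_congr rfl fun i _ => by ring
        rw [this]
        congr 1
        simp [ite_mul]
      rw [hexpand] at hcf
      have : x j - ∑ i, W i j * x i = 0 := hcf
      linarith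
    have hconst := ctf_harmonic hWnn hWcol hirr hharm
    have hxsum : ∑ i, x i = 0 := by
      have hPχ : ∑ i, (P.mulVec χ) i = 0 := by
        calc ∑ i, (P.mulVec χ) i = ∑ i, ∑ j, P i j * χ j := by
              simp [Matrix.mulVec, dotProduct]
          _ = ∑ j, ∑ i, P i j * χ j := Finset.sum_comm
          _ = ∑ j, (∑ i, P i j) * χ j :=
              Finset.sum_congr rfl fun j _ => (Finset.sum_mul _ _ _).symm
          _ = 0 := by simp [hPcol]
      simp [hxdef, Finset.sum_sub_distrib, hχsum, hPχ, Pi.sub_apply]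
    have hx0 : ∀ i, x i = 0 := by
      intro i
      have hsum : ∑ j, x j = (n:ℝ) * x i := by
        calc ∑ j, x j = ∑ _j : Fin n, x i := Finset.sum_congr rfl fun j _ => hconst j i
          _ = (n:ℝ) * x i := by simp [Finset.sum_const, nsmul_eq_mul]
      rw [hxsum] at hsum
      have hn : (0:ℝ) < n := by exact_mod_cast u.pos
      rcases mul_eq_zero.1 hsum.symm with h | h
      · exact absurd h (ne_of_gt hn)
      · exact h
    have hfin : χ - P.mulVec χ = 0 := by rw [← hxdef]; exact funext hx0
    exact (sub_eq_zero.mp hfin).symm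
  -- Penrose-derived identities
  have hfun1 : (fun i => (s i)⁻¹ * s i) = (1 : Fin n → ℝ) :=
    funext fun i => inv_mul_cancel₀ (hspos i).ne'
  have hfun2 : (fun i => s i * (s i)⁻¹) = (1 : Fin n → ℝ) :=
    funext fun i => mul_inv_cancel₀ (hspos i).ne'
  have hDinv : Matrix.diagonal (fun i => (s i)⁻¹) * Matrix.diagonal s = 1 := by
    rw [Matrix.diagonal_mul_diagonal, hfun1]
    exact Matrix.diagonal_one
  have hLbT : Lbᵀ = Matrix.diagonal s * ((1:Matrix (Fin n) (Fin n) ℝ) - W)ᵀ := by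
    rw [hLb, Matrix.transpose_mul, Matrix.diagonal_transpose]
  have h1 : Lbᵀ * (Lb * Lbp) = Lbᵀ := by
    calc Lbᵀ * (Lb * Lbp) = Lbᵀ * (Lb * Lbp)ᵀ := by rw [hLbp.2.2.1]
      _ = ((Lb * Lbp) * Lb)ᵀ := (Matrix.transpose_mul _ _).symm
      _ = Lbᵀ := by rw [hLbp.1]
  have hPL1 : ((1:Matrix (Fin n) (Fin n) ℝ) - W)ᵀ * (Lb * Lbp)
      = ((1:Matrix (Fin n) (Fin n) ℝ) - W)ᵀ := by
    have h2 : Matrix.diagonal s * (((1:Matrix (Fin n) (Fin n) ℝ) - W)ᵀ * (Lb * Lbp))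
        = Matrix.diagonal s * ((1:Matrix (Fin n) (Fin n) ℝ) - W)ᵀ := by
      rw [← Matrix.mul_assoc, ← hLbT, h1, hLbT]
    calc ((1:Matrix (Fin n) (Fin n) ℝ) - W)ᵀ * (Lb * Lbp)
        = 1 * (((1:Matrix (Fin n) (Fin n) ℝ) - W)ᵀ * (Lb * Lbp)) := (one_mul _).symm
      _ = (Matrix.diagonal (fun i => (s i)⁻¹) * Matrix.diagonal s)
            * (((1:Matrix (Fin n) (Fin n) ℝ) - W)ᵀ * (Lb * Lbp)) := by rw [hDinv]
      _ = Matrix.diagonal (fun i => (s i)⁻¹)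
            * (Matrix.diagonal s * (((1:Matrix (Fin n) (Fin n) ℝ) - W)ᵀ * (Lb * Lbp))) :=
          Matrix.mul_assoc _ _ _
      _ = Matrix.diagonal (fun i => (s i)⁻¹)
            * (Matrix.diagonal s * ((1:Matrix (Fin n) (Fin n) ℝ) - W)ᵀ) := by rw [h2]
      _ = (Matrix.diagonal (fun i => (s i)⁻¹) * Matrix.diagonal s)
            * ((1:Matrix (Fin n) (Fin n) ℝ) - W)ᵀ := (Matrix.mul_assoc _ _ _).symm
      _ = ((1:Matrix (Fin n) (Fin n) ℝ) - W)ᵀ := by rw [hDinv, one_mul]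
  have hP1 : (Lb * Lbp).mulVec χ = χ := proj _ hPL1 (colmul _ _ hLbcol)
  have hPL2 : ((1:Matrix (Fin n) (Fin n) ℝ) - W)ᵀ * (((1:Matrix (Fin n) (Fin n) ℝ) - W) * Lp)
      = ((1:Matrix (Fin n) (Fin n) ℝ) - W)ᵀ := by
    calc ((1:Matrix (Fin n) (Fin n) ℝ) - W)ᵀ * (((1:Matrix (Fin n) (Fin n) ℝ) - W) * Lp)
        = ((1:Matrix (Fin n) (Fin n) ℝ) - W)ᵀ * (((1:Matrix (Fin n) (Fin n) ℝ) - W) * Lp)ᵀ := by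
          rw [hLp.2.2.1]
      _ = ((((1:Matrix (Fin n) (Fin n) ℝ) - W) * Lp) * ((1:Matrix (Fin n) (Fin n) ℝ) - W))ᵀ :=
          (Matrix.transpose_mul _ _).symm
      _ = ((1:Matrix (Fin n) (Fin n) ℝ) - W)ᵀ := by rw [hLp.1]
  have hP2 : (((1:Matrix (Fin n) (Fin n) ℝ) - W) * Lp).mulVec χ = χ :=
    proj _ hPL2 (colmul _ _ hLcol)
  -- C = χ ⬝ g
  have hCχ : C = χ ⬝ᵥ g := by
    rw [hC, hχdef, sub_dotProduct, single_dotProduct,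
      single_dotProduct]
    simp only [hgdef, one_mul]
    rw [hu0, hv0]
    ring
  have goal1 : C = χ ⬝ᵥ Lbp.mulVec χ := by
    calc C = χ ⬝ᵥ g := hCχ
      _ = g ⬝ᵥ χ := dotProduct_comm _ _
      _ = g ⬝ᵥ ((Lb * Lbp) *ᵥ χ) := by rw [hP1]
      _ = g ⬝ᵥ (Lb *ᵥ (Lbp *ᵥ χ)) := by rw [Matrix.mulVec_mulVec]
      _ = (g ᵥ* Lb) ⬝ᵥ (Lbp *ᵥ χ) := Matrix.dotProduct_mulVec _ _ _
      _ = (Lbᵀ *ᵥ g) ⬝ᵥ (Lbp *ᵥ χ) := by rw [Matrix.mulVec_transpose]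
      _ = χ ⬝ᵥ (Lbp *ᵥ χ) := by rw [hLbTg]
  have hDinv' : (Matrix.diagonal s)⁻¹ = Matrix.diagonal (fun i => (s i)⁻¹) :=
    Matrix.inv_eq_right_inv (by
      rw [Matrix.diagonal_mul_diagonal, hfun2]
      exact Matrix.diagonal_one)
  have goal2 : C = χ ⬝ᵥ ((Matrix.diagonal s)⁻¹ * Lp) *ᵥ χ := by
    rw [hDinv']
    have hvm : χ ᵥ* Matrix.diagonal (fun i => (s i)⁻¹)
        = g ᵥ* ((1:Matrix (Fin n) (Fin n) ℝ) - W) := by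
      funext w
      rw [Matrix.vecMul_diagonal, hgL w, mul_comm]
    calc C = χ ⬝ᵥ g := hCχ
      _ = g ⬝ᵥ χ := dotProduct_comm _ _
      _ = g ⬝ᵥ ((((1:Matrix (Fin n) (Fin n) ℝ) - W) * Lp) *ᵥ χ) := by rw [hP2]
      _ = g ⬝ᵥ (((1:Matrix (Fin n) (Fin n) ℝ) - W) *ᵥ (Lp *ᵥ χ)) := by
          rw [Matrix.mulVec_mulVec]
      _ = (g ᵥ* ((1:Matrix (Fin n) (Fin n) ℝ) - W)) ⬝ᵥ (Lp *ᵥ χ) :=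
          Matrix.dotProduct_mulVec _ _ _
      _ = (χ ᵥ* Matrix.diagonal (fun i => (s i)⁻¹)) ⬝ᵥ (Lp *ᵥ χ) := by rw [hvm]
      _ = χ ⬝ᵥ (Matrix.diagonal (fun i => (s i)⁻¹) *ᵥ (Lp *ᵥ χ)) :=
          (Matrix.dotProduct_mulVec _ _ _).symm
      _ = χ ⬝ᵥ ((Matrix.diagonal (fun i => (s i)⁻¹) * Lp) *ᵥ χ) := by
          rw [Matrix.mulVec_mulVec]
  have goal3 : C = χ ⬝ᵥ (Lbpᵀ * Ub * Lbp) *ᵥ χ := by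
    set y : Fin n → ℝ := Lbp *ᵥ χ with hy
    have h4 : Lb *ᵥ y = χ := by rw [hy, Matrix.mulVec_mulVec]; exact hP1
    have h3 : y ⬝ᵥ (Ub *ᵥ y) = y ⬝ᵥ (Lb *ᵥ y) := by
      have ht : y ⬝ᵥ (Lbᵀ *ᵥ y) = y ⬝ᵥ (Lb *ᵥ y) := by
        rw [Matrix.dotProduct_mulVec, Matrix.vecMul_transpose, dotProduct_comm]
      rw [hUb, Matrix.smul_mulVec, Matrix.add_mulVec, dotProduct_smul,
        dotProduct_add, ht, smul_eq_mul]
      ring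
    calc C = χ ⬝ᵥ Lbp *ᵥ χ := goal1
      _ = y ⬝ᵥ χ := by rw [← hy]; exact dotProduct_comm _ _
      _ = y ⬝ᵥ (Lb *ᵥ y) := by rw [h4]
      _ = y ⬝ᵥ (Ub *ᵥ y) := h3.symm
      _ = (χ ᵥ* Lbpᵀ) ⬝ᵥ (Ub *ᵥ y) := by rw [Matrix.vecMul_transpose, ← hy]
      _ = χ ⬝ᵥ (Lbpᵀ *ᵥ (Ub *ᵥ y)) := (Matrix.dotProduct_mulVec _ _ _).symm
      _ = χ ⬝ᵥ ((Lbpᵀ * Ub * Lbp) *ᵥ χ) := by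
          rw [hy, Matrix.mulVec_mulVec, Matrix.mulVec_mulVec]
  exact ⟨goal1, goal2, goal3⟩
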